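/- Let A ∈ ℝ^{Ω×Ω} have nonnegative off-diagonal entries and columns summing to zero, and suppose A satisfies detailed balance: there exists μ ∈ ℝ^{Ω} with μ_j > 0 for all j and A_{ij} μ_j = A_{ji} μ_i for all i, j ∈ Ω. Let X be a partition of Ω such that every compartment has at most one entrance point. Then for all α, β ∈ X with α ≠ β whose entrance points i_α ∈ α, i_β ∈ β exist, the response function Φ_{βα}(t) = (A_{αβ} exp(t A_{ββ}))_{i_α, i_β} has the form Φ_{βα}(t) = λ_{i_β, i_α} Σ_{j∈β} κ_j² e^{−ν_j t} for some κ_j ≥ 0, ν_j ≥ 0 with Σ_{j∈β} κ_j² = 1, where λ_{i_β, i_α} = A_{i_α, i_β} ≥ 0; if one of the entrance points does not exist then Φ_{βα} ≡ 0. In particular, each Φ_{βα} is a completely monotone function on (0,∞). -/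

import Mathlib

open MeasureTheory Matrix NormedSpace

variable {Ω X : Type*}

/-- The block `A_{αβ}` of a matrix `A : ℝ^{Ω×Ω}` with respect to the partition of `Ω`
into the fibers of `π : Ω → X`. -/
def blockM [DecidableEq X] (A : Matrix Ω Ω ℝ) (π : Ω → X) (α β : X) :
    Matrix {i : Ω // π i = α} {j : Ω // π j = β} ℝ :=
  fun i j => A i.1 j.1

/-- A state `i` is an entrance point of its compartment `π i` if some state of another
compartment jumps to `i` with positive rate. -/
def IsEntrance (A : Matrix Ω Ω ℝ) (π : Ω → X) (i : Ω) : Prop :=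
  ∃ j, π j ≠ π i ∧ 0 < A i j


lemma iterExpSum {J : Type*} [Fintype J] (w d : J → ℝ) (n : ℕ) :
    iteratedDeriv n (fun t : ℝ => ∑ j, w j * Real.exp (d j * t)) =
      fun t => ∑ j, (w j * d j ^ n) * Real.exp (d j * t) := by
  induction n with
  | zero => simp
  | succ n ih =>
    have hD : ∀ (j : J) (t : ℝ), HasDerivAt (fun t => (w j * d j ^ n) * Real.exp (d j * t))
        ((w j * d j ^ (n+1)) * Real.exp (d j * t)) t := by
      intro j t
      have h1 : HasDerivAt (fun t : ℝ => d j * t) (d j) t := by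
        simpa using (hasDerivAt_id t).const_mul (d j)
      have h2 := h1.exp
      have := h2.const_mul (w j * d j ^ n)
      refine this.congr_deriv ?_
      ring
    rw [iteratedDeriv_succ, ih]
    funext t
    rw [deriv_fun_sum (fun j _ => (hD j t).differentiableAt)]
    exact Finset.sum_congr rfl fun j _ => (hD j t).deriv

lemma subGenerator_exp_diag {m : Type*} [Fintype m] [DecidableEq m]
    (B : Matrix m m ℝ) (μ : m → ℝ) (hμ : ∀ i, 0 < μ i)
    (hoff : ∀ i j, i ≠ j → 0 ≤ B i j)
    (hcol : ∀ j, ∑ i, B i j ≤ 0)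
    (hdb : ∀ i j, B i j * μ j = B j i * μ i)
    (i₀ : m) :
    ∃ κ ν : m → ℝ, (∀ k, 0 ≤ κ k) ∧ (∀ k, 0 ≤ ν k) ∧ (∑ k, κ k ^ 2) = 1 ∧
      ∀ t : ℝ, (NormedSpace.exp (t • B)) i₀ i₀ = ∑ k, κ k ^ 2 * Real.exp (-(ν k) * t) := by
  have : Nonempty m := ⟨i₀⟩
  set p : m → ℝ := fun i => Real.sqrt (μ i) with hp
  have hppos : ∀ i, 0 < p i := fun i => Real.sqrt_pos.2 (hμ i)
  have hpne : ∀ i, p i ≠ 0 := fun i => (hppos i).ne'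
  have hpsq : ∀ i, p i * p i = μ i := fun i => Real.mul_self_sqrt (hμ i).le
  set P : Matrix m m ℝ := diagonal p with hP
  set Q : Matrix m m ℝ := diagonal (fun i => (p i)⁻¹) with hQ
  have hPQ : P * Q = 1 := by
    rw [hP, hQ, diagonal_mul_diagonal]
    convert diagonal_one using 2
    funext i
    exact mul_inv_cancel₀ (hpne i)
  have hQP : Q * P = 1 := by
    rw [hP, hQ, diagonal_mul_diagonal]
    convert diagonal_one using 2
    funext i
    exact inv_mul_cancel₀ (hpne i)
  set S : Matrix m m ℝ := Q * B * P with hSdef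
  have hSapp : ∀ i j, S i j = (p i)⁻¹ * B i j * p j := by
    intro i j
    rw [hSdef, hP, hQ, Matrix.mul_diagonal, Matrix.diagonal_mul]
  have hS : S.IsHermitian := by
    rw [Matrix.IsHermitian]
    ext i j
    rw [Matrix.conjTranspose_apply, hSapp, hSapp]
    simp only [star_trivial]
    rw [inv_mul_eq_div, inv_mul_eq_div, div_mul_eq_mul_div, div_mul_eq_mul_div,
      div_eq_div_iff (hpne j) (hpne i)]
    linear_combination hdb j i + B j i * hpsq i - B i j * hpsq j
  -- eigen data of S
  set V : Matrix m m ℝ := (Matrix.IsHermitian.eigenvectorUnitary hS : Matrix m m ℝ) with hV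
  set ev : m → ℝ := hS.eigenvalues with hevdef
  have hunit := (Matrix.IsHermitian.eigenvectorUnitary hS).2
  rw [Unitary.mem_iff] at hunit
  obtain ⟨hV1, hV2⟩ := hunit
  -- eigenvalues are nonpositive
  have hevle : ∀ k, ev k ≤ 0 := by
    intro k
    set v : m → ℝ := ⇑(hS.eigenvectorBasis k) with hv
    have hmv : S *ᵥ v = ev k • v := hS.mulVec_eigenvectorBasis k
    have hvne : v ≠ 0 := by
      have hne := hS.eigenvectorBasis.orthonormal.ne_zero k
      intro h
      exact hne (by ext j; exact congrFun h j)
    have hsymm : ∀ a b, S a b = S b a := by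
      intro a b
      conv_lhs => rw [← hS]
      rw [Matrix.conjTranspose_apply, star_trivial]
    set u : m → ℝ := fun j => v j * (p j)⁻¹ with hu
    have hrel : ∀ i, ∑ j, B j i * u j = ev k * u i := by
      intro i
      have h1 : ∑ j, S i j * v j = ev k * v i := by
        have := congrFun hmv i
        simpa [Matrix.mulVec, dotProduct, smul_eq_mul] using this
      have h2 : ∑ j, ((p j)⁻¹ * B j i * p i) * v j = ev k * v i := by
        rw [← h1]
        exact Finset.sum_congr rfl fun j _ => by rw [hsymm i j, hSapp]
      have h3 := congrArg (· * (p i)⁻¹) h2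
      simp only [Finset.sum_mul] at h3
      calc ∑ j, B j i * u j = ∑ j, ((p j)⁻¹ * B j i * p i) * v j * (p i)⁻¹ := by
            refine Finset.sum_congr rfl fun j _ => ?_
            simp only [hu]
            linear_combination (-((p j)⁻¹ * B j i * v j)) * (mul_inv_cancel₀ (hpne i))
        _ = ev k * v i * (p i)⁻¹ := h3
        _ = ev k * u i := by simp only [hu]; ring
    obtain ⟨m₀, -, hmax⟩ := Finset.exists_max_image Finset.univ (fun j => |u j|) Finset.univ_nonempty
    have hmax' : ∀ j, |u j| ≤ |u m₀| := fun j => hmax j (Finset.mem_univ j)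
    have hum : u m₀ ≠ 0 := by
      intro h
      apply hvne
      funext j
      have h1 : |u j| ≤ 0 := by
        have := hmax' j
        rwa [h, abs_zero] at this
      have huj : u j = 0 := abs_eq_zero.1 (le_antisymm h1 (abs_nonneg _))
      have hvj : v j = u j * p j := by
        simp only [hu]
        rw [mul_assoc, inv_mul_cancel₀ (hpne j), mul_one]
      rw [hvj, huj, zero_mul]
      rfl
    set ε : ℝ := if 0 ≤ u m₀ then 1 else -1 with hε
    set w : m → ℝ := fun j => ε * u j with hw
    have hwm : w m₀ = |u m₀| := by
      simp only [hw, hε]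
      rcases le_or_gt 0 (u m₀) with h | h
      · rw [if_pos h, one_mul, abs_of_nonneg h]
      · rw [if_neg (not_le.2 h), abs_of_neg h]; ring
    have hwmpos : 0 < w m₀ := hwm ▸ abs_pos.2 hum
    have habsε : |ε| = 1 := by
      simp only [hε]
      rcases le_or_gt 0 (u m₀) with h | h
      · rw [if_pos h, abs_one]
      · rw [if_neg (not_le.2 h)]; norm_num
    have hwle : ∀ j, w j ≤ w m₀ := by
      intro j
      calc w j ≤ |w j| := le_abs_self _
        _ = |ε| * |u j| := by rw [hw]; exact abs_mul _ _
        _ = |u j| := by rw [habsε, one_mul]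
        _ ≤ |u m₀| := hmax' j
        _ = w m₀ := hwm.symm
    have hwrel : ev k * w m₀ = ∑ j, B j m₀ * w j := by
      simp only [hw]
      rw [show ∑ j, B j m₀ * (ε * u j) = ε * ∑ j, B j m₀ * u j by
        rw [Finset.mul_sum]; exact Finset.sum_congr rfl fun j _ => by ring]
      rw [hrel m₀]
      ring
    have key : ev k * w m₀ ≤ 0 := by
      rw [hwrel]
      calc ∑ j, B j m₀ * w j ≤ ∑ j, B j m₀ * w m₀ := by
            refine Finset.sum_le_sum fun j _ => ?_
            rcases eq_or_ne j m₀ with rfl | hne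
            · exact le_refl _
            · exact mul_le_mul_of_nonneg_left (hwle j) (hoff j m₀ hne)
        _ = (∑ j, B j m₀) * w m₀ := (Finset.sum_mul _ _ _).symm
        _ ≤ 0 := by nlinarith [hcol m₀, hwmpos]
    by_contra hpos
    push_neg at hpos
    nlinarith
  -- the exp formula
  have hexp : ∀ t : ℝ, (NormedSpace.exp (t • B)) i₀ i₀ = ∑ k, (V i₀ k)^2 * Real.exp (t * ev k) := by
    intro t
    have hB : B = P * S * Q := by
      rw [hSdef]
      simp only [← Matrix.mul_assoc]
      rw [hPQ, Matrix.one_mul, Matrix.mul_assoc, hPQ, Matrix.mul_one]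
    have hSspec : S = V * diagonal ev * star V := by
      have h := hS.spectral_theorem
      rw [Unitary.conjStarAlgAut_apply] at h
      exact h
    have hDecomp : t • B = P * (V * diagonal (fun k => t * ev k) * star V) * Q := by
      rw [hB, hSspec]
      have h1 : t • diagonal ev = diagonal (fun k => t * ev k) := by
        rw [← Matrix.diagonal_smul]
        congr 1
      rw [← h1]
      simp only [mul_smul_comm, smul_mul_assoc]
    have hexpS : NormedSpace.exp (V * diagonal (fun k => t * ev k) * star V)
        = V * diagonal (fun k => Real.exp (t * ev k)) * star V := by
      have h := Matrix.exp_units_conj (⟨V, star V, hV2, hV1⟩ : (Matrix m m ℝ)ˣ)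
        (diagonal (fun k => t * ev k))
      simp only [Units.inv_mk, Units.val_mk] at h
      rw [h, Matrix.exp_diagonal]
      have h2 : (NormedSpace.exp fun k => t * ev k) = fun k => Real.exp (t * ev k) := by
        funext k
        rw [Pi.coe_exp, ← Real.exp_eq_exp_ℝ]
      rw [h2]
    have hexpB : NormedSpace.exp (t • B) = P * (V * diagonal (fun k => Real.exp (t * ev k)) * star V) * Q := by
      rw [hDecomp]
      have h := Matrix.exp_units_conj (⟨P, Q, hPQ, hQP⟩ : (Matrix m m ℝ)ˣ)
        (V * diagonal (fun k => t * ev k) * star V)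
      simp only [Units.inv_mk, Units.val_mk] at h
      rw [h, hexpS]
    rw [hexpB, hP, hQ, Matrix.mul_diagonal, Matrix.diagonal_mul,
      mul_comm (p i₀), mul_assoc, mul_inv_cancel₀ (hpne i₀), mul_one, Matrix.mul_apply]
    refine Finset.sum_congr rfl fun k _ => ?_
    rw [Matrix.mul_diagonal, Matrix.star_apply, star_trivial]
    ring
  refine ⟨fun k => |V i₀ k|, fun k => -(ev k), fun k => abs_nonneg _,
    fun k => by simpa using hevle k, ?_, ?_⟩
  · have h1 := congrFun (congrFun hV2 i₀) i₀
    rw [Matrix.mul_apply, Matrix.one_apply_eq] at h1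
    rw [← h1]
    refine Finset.sum_congr rfl fun k _ => ?_
    simp only [Matrix.star_apply, star_trivial, sq_abs]
    ring
  · intro t
    rw [hexp t]
    refine Finset.sum_congr rfl fun k _ => ?_
    rw [sq_abs, neg_neg, mul_comm (ev k) t]

/-- **Response functions of detailed-balance systems are completely monotone.**
If `A` has nonnegative off-diagonal entries, zero column sums, and satisfies detailed
balance (`A_{ij}μ_j = A_{ji}μ_i` for a positive vector `μ`), and every compartment of the
partition has at most one entrance point, then for `α ≠ β` with entrance points
`i_α ∈ α`, `i_β ∈ β` the response function `Φ_{βα}(t) = (A_{αβ}e^{tA_{ββ}})_{i_α,i_β}`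
has the form `λ_{i_β,i_α} ∑_{j∈β} κ_j² e^{−ν_j t}` with `κ_j, ν_j ≥ 0`, `∑κ_j² = 1`,
`λ_{i_β,i_α} = A_{i_α,i_β} ≥ 0`; if an entrance point does not exist the kernel vanishes
identically. In particular each `Φ_{βα}` is completely monotone on `(0,∞)`. -/
theorem detailed_balance_response_completely_monotone
    [Fintype Ω] [DecidableEq Ω] [Fintype X] [DecidableEq X]
    (A : Matrix Ω Ω ℝ) (π : Ω → X)
    (hoffdiag : ∀ i j, i ≠ j → 0 ≤ A i j)
    (hcolsum : ∀ j, ∑ i, A i j = 0)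
    (μ : Ω → ℝ) (hμpos : ∀ j, 0 < μ j) (hμsum : ∑ j, μ j = 1)
    (hdb : ∀ i j, A i j * μ j = A j i * μ i)
    (hone : ∀ i i', π i = π i' → IsEntrance A π i → IsEntrance A π i' → i = i') :
    (∀ (α β : X), α ≠ β →
      ∀ (iα : {i : Ω // π i = α}) (iβ : {j : Ω // π j = β}),
        IsEntrance A π iα.1 → IsEntrance A π iβ.1 →
        (∃ κ ν : {j : Ω // π j = β} → ℝ,
          (∀ j, 0 ≤ κ j) ∧ (∀ j, 0 ≤ ν j) ∧ (∑ j, κ j ^ 2) = 1 ∧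
          (∀ t : ℝ, 0 ≤ t →
            (blockM A π α β * NormedSpace.exp (t • blockM A π β β)) iα iβ =
              A iα.1 iβ.1 * ∑ j, κ j ^ 2 * Real.exp (-(ν j) * t))) ∧
        -- complete monotonicity of `t ↦ Φ_{βα}(t)` on `(0,∞)`
        (∀ (n : ℕ) (t : ℝ), 0 < t →
          0 ≤ (-1 : ℝ) ^ n *
            iteratedDeriv n
              (fun s => (blockM A π α β * NormedSpace.exp (s • blockM A π β β)) iα iβ) t)) ∧
    -- if the entrance point of a compartment does not exist, the kernel vanishes
    (∀ (α β : X), α ≠ β →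
      ∀ (iα : {i : Ω // π i = α}), ¬ IsEntrance A π iα.1 →
        ∀ (iβ : {j : Ω // π j = β}) (t : ℝ),
          (blockM A π α β * NormedSpace.exp (t • blockM A π β β)) iα iβ = 0) := by
  constructor
  · intro α β hne iα iβ hEα hEβ
    have hne1 : ∀ j : {j : Ω // π j = β}, iα.1 ≠ j.1 := by
      intro j h
      exact hne (iα.2 ▸ j.2 ▸ congrArg π h)
    have hc : 0 ≤ A iα.1 iβ.1 := hoffdiag _ _ (hne1 iβ)
    -- the row of the block matrix vanishes off the entrance point
    have hrow : ∀ j : {j : Ω // π j = β}, j ≠ iβ → A iα.1 j.1 = 0 := by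
      intro j hj
      rcases (hoffdiag _ _ (hne1 j)).lt_or_eq with hlt | heq
      · exfalso
        have hji : 0 < A j.1 iα.1 := by
          by_contra hle
          push_neg at hle
          nlinarith [hdb iα.1 j.1, hμpos iα.1, hμpos j.1]
        have hEj : IsEntrance A π j.1 :=
          ⟨iα.1, by rw [iα.2, j.2]; exact hne, hji⟩
        exact hj (Subtype.ext (hone j.1 iβ.1 (j.2.trans iβ.2.symm) hEj hEβ))
      · exact heq.symm
    have hprod : ∀ M : Matrix {j : Ω // π j = β} {j : Ω // π j = β} ℝ,
        (blockM A π α β * M) iα iβ = A iα.1 iβ.1 * M iβ iβ := by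
      intro M
      rw [Matrix.mul_apply, Finset.sum_eq_single iβ]
      · rfl
      · intro j _ hj
        rw [show blockM A π α β iα j = A iα.1 j.1 from rfl, hrow j hj, zero_mul]
      · intro h
        exact absurd (Finset.mem_univ iβ) h
    -- column sums of the diagonal block are nonpositive
    have hcol' : ∀ j : {j : Ω // π j = β}, ∑ i, blockM A π β β i j ≤ 0 := by
      intro j
      have h1 : ∑ i : {i : Ω // π i = β}, A i.1 j.1
          = ∑ i ∈ Finset.univ.filter (fun i => π i = β), A i j.1 := by
        exact (Finset.sum_subtype (Finset.univ.filter fun i => π i = β)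
          (fun x => by simp) (fun i => A i j.1)).symm
      have hsplit := Finset.sum_filter_add_sum_filter_not Finset.univ
        (fun i => π i = β) (fun i => A i j.1)
      have h2 : 0 ≤ ∑ i ∈ Finset.univ.filter (fun i => ¬ π i = β), A i j.1 := by
        refine Finset.sum_nonneg fun i hi => ?_
        rw [Finset.mem_filter] at hi
        refine hoffdiag i j.1 fun h => hi.2 (h ▸ j.2)
      have h3 := hcolsum j.1
      show (∑ i : {i : Ω // π i = β}, A i.1 j.1) ≤ 0
      rw [h1]
      linarith
    obtain ⟨κ, ν, hκ, hν, hsum, hform⟩ :=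
      subGenerator_exp_diag (blockM A π β β) (fun j => μ j.1) (fun j => hμpos j.1)
        (fun i j hij => hoffdiag i.1 j.1 (fun h => hij (Subtype.ext h)))
        hcol'
        (fun i j => hdb i.1 j.1)
        iβ
    refine ⟨⟨κ, ν, hκ, hν, hsum, fun t _ => by rw [hprod, hform t]⟩, ?_⟩
    intro n t ht
    have hfun : (fun s => (blockM A π α β * NormedSpace.exp (s • blockM A π β β)) iα iβ)
        = fun s => ∑ k, (A iα.1 iβ.1 * κ k ^ 2) * Real.exp (-(ν k) * s) := by
      funext s
      rw [hprod, hform s, Finset.mul_sum]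
      exact Finset.sum_congr rfl fun k _ => by ring
    have hIter : iteratedDeriv n
        (fun s => ∑ k, (A iα.1 iβ.1 * κ k ^ 2) * Real.exp (-(ν k) * s)) t
        = ∑ k, ((A iα.1 iβ.1 * κ k ^ 2) * (-(ν k)) ^ n) * Real.exp (-(ν k) * t) := by
      exact congrFun (iterExpSum (fun k => A iα.1 iβ.1 * κ k ^ 2) (fun k => -(ν k)) n) t
    rw [hfun, hIter, Finset.mul_sum]
    refine Finset.sum_nonneg fun k _ => ?_
    have hh : ((-1 : ℝ)) ^ n * (-(ν k)) ^ n = ν k ^ n := by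
      rw [← mul_pow, neg_one_mul, neg_neg]
    calc (0:ℝ) ≤ (A iα.1 iβ.1 * κ k ^ 2) * ν k ^ n * Real.exp (-(ν k) * t) := by
          have := Real.exp_pos (-(ν k) * t)
          have h4 : 0 ≤ A iα.1 iβ.1 * κ k ^ 2 := mul_nonneg hc (sq_nonneg _)
          have h5 : 0 ≤ ν k ^ n := pow_nonneg (hν k) n
          positivity
      _ = (-1 : ℝ) ^ n * ((A iα.1 iβ.1 * κ k ^ 2) * (-(ν k)) ^ n * Real.exp (-(ν k) * t)) := by
          rw [show ((-1 : ℝ)) ^ n * ((A iα.1 iβ.1 * κ k ^ 2) * (-(ν k)) ^ n * Real.exp (-(ν k) * t))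
            = (A iα.1 iβ.1 * κ k ^ 2) * (((-1 : ℝ)) ^ n * (-(ν k)) ^ n) * Real.exp (-(ν k) * t) by ring,
            hh]
  · intro α β hne iα hno iβ t
    rw [Matrix.mul_apply]
    refine Finset.sum_eq_zero fun j _ => ?_
    have hne1 : iα.1 ≠ j.1 := by
      intro h
      exact hne (iα.2 ▸ j.2 ▸ congrArg π h)
    have h0 : A iα.1 j.1 = 0 := by
      rcases (hoffdiag _ _ hne1).lt_or_eq with hlt | heq
      · exact absurd ⟨j.1, by rw [iα.2, j.2]; exact hne.symm, hlt⟩ hno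
      · exact heq.symm
    rw [show blockM A π α β iα j = A iα.1 j.1 from rfl, h0, zero_mul]
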